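/- arXiv:2304.10573 — 7 statements merged into one kernel-verified Lean document; each statement's English description precedes it below -/
import Mathlib

section
/- Let f : ℝ → ℝ be differentiable and convex with f'(0) = 0, and let μ be a probability mass function over a finite action set A with μ(a) > 0 for all a. Let Q : A → ℝ and suppose V* minimizes V ↦ ∑_a μ(a) · f(Q(a) − V). If Q(a) ≠ V* for all a, define w(a) = |f'(Q(a) − V*)| / |Q(a) − V*| and π(a) = μ(a)·w(a) / Z where Z = ∑_b μ(b)·w(b) (assume Z > 0). Then V* also minimizes V ↦ ∑_a π(a) · (Q(a) − V)². -/
theorem stmt_0 {A : Type*} [Fintype A]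
    (f : ℝ → ℝ) (hdiff : Differentiable ℝ f) (hconv : ConvexOn ℝ Set.univ f)
    (hf0 : deriv f 0 = 0)
    (μ Q : A → ℝ) (hμpos : ∀ a, 0 < μ a) (hμsum : ∑ a, μ a = 1)
    (Vstar : ℝ)
    (hmin : ∀ V : ℝ, ∑ a, μ a * f (Q a - Vstar) ≤ ∑ a, μ a * f (Q a - V))
    (hQ : ∀ a, Q a ≠ Vstar)
    (w : A → ℝ) (hw : ∀ a, w a = |deriv f (Q a - Vstar)| / |Q a - Vstar|)
    (Z : ℝ) (hZ : Z = ∑ a, μ a * w a) (hZpos : 0 < Z)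
    (π : A → ℝ) (hπ : ∀ a, π a = μ a * w a / Z) :
    ∀ V : ℝ, ∑ a, π a * (Q a - Vstar) ^ 2 ≤ ∑ a, π a * (Q a - V) ^ 2 := by
  -- deriv f is monotone
  have hmono : Monotone (deriv f) := by
    have := hconv.monotoneOn_deriv (fun x _ => hdiff x)
    intro x y hxy
    exact this (Set.mem_univ x) (Set.mem_univ y) hxy
  -- sign of deriv f
  have hsign : ∀ x : ℝ, |deriv f x| * x = deriv f x * |x| := by
    intro x
    rcases lt_trichotomy x 0 with h | h | h
    · have : deriv f x ≤ 0 := hf0 ▸ hmono h.le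
      rw [abs_of_nonpos this, abs_of_neg h]; ring
    · simp [h]
    · have : 0 ≤ deriv f x := hf0 ▸ hmono h.le
      rw [abs_of_nonneg this, abs_of_pos h]
  -- first-order condition for the original problem
  have hg : ∀ V : ℝ, HasDerivAt (fun V => ∑ a, μ a * f (Q a - V)) (∑ a, μ a * (-deriv f (Q a - V))) V := by
    intro V
    apply HasDerivAt.fun_sum
    intro a _
    have h1 : HasDerivAt (fun V : ℝ => Q a - V) (-1) V := by
      simpa using (hasDerivAt_id V).const_sub (Q a)
    have h2 := ((hdiff (Q a - V)).hasDerivAt.comp V h1).const_mul (μ a)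
    simpa [mul_comm, mul_assoc] using h2
  have hfoc : ∑ a, μ a * deriv f (Q a - Vstar) = 0 := by
    have hminon : IsMinOn (fun V => ∑ a, μ a * f (Q a - V)) Set.univ Vstar := by
      intro V _; exact hmin V
    have := (hminon.isLocalMin (by simp)).deriv_eq_zero
    rw [(hg Vstar).deriv] at this
    have : -∑ a, μ a * deriv f (Q a - Vstar) = 0 := by
      rw [← this, ← Finset.sum_neg_distrib]; congr 1; ext a; ring
    linarith
  -- key: ∑ π a * (Q a - Vstar) = 0
  have hkey : ∑ a, π a * (Q a - Vstar) = 0 := by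
    have : ∀ a, π a * (Q a - Vstar) = (μ a * deriv f (Q a - Vstar)) / Z := by
      intro a
      rw [hπ a, hw a]
      have hx : (Q a - Vstar) ≠ 0 := sub_ne_zero.mpr (hQ a)
      have habs : |Q a - Vstar| ≠ 0 := abs_ne_zero.mpr hx
      field_simp
      rw [mul_assoc (μ a), mul_comm (Q a - Vstar), hsign (Q a - Vstar)]
      ring
    rw [Finset.sum_congr rfl (fun a _ => this a), ← Finset.sum_div, hfoc, zero_div]
  -- π nonneg
  have hπnn : ∀ a, 0 ≤ π a := by
    intro a
    rw [hπ a, hw a]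
    exact div_nonneg (mul_nonneg (hμpos a).le (div_nonneg (abs_nonneg _) (abs_nonneg _))) hZpos.le
  intro V
  have expand : ∀ a, π a * (Q a - V) ^ 2 =
      π a * (Q a - Vstar) ^ 2 + 2 * (Vstar - V) * (π a * (Q a - Vstar)) + π a * (Vstar - V) ^ 2 := by
    intro a; ring
  rw [Finset.sum_congr rfl (fun a _ => expand a)]
  rw [Finset.sum_add_distrib, Finset.sum_add_distrib, ← Finset.mul_sum, hkey, mul_zero]
  have : 0 ≤ ∑ a, π a * (Vstar - V) ^ 2 :=
    Finset.sum_nonneg fun a _ => mul_nonneg (hπnn a) (sq_nonneg _)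
  linarith
end

section
/- Fix α > 0, a finite action set A, a probability mass function μ with μ(a) > 0 for all a, and Q : A → ℝ. The function V ↦ ∑_a μ(a) · (exp(α(Q(a) − V)) − α(Q(a) − V)) attains its unique minimum at V* = (1/α) · log ∑_a exp(α·Q(a) + log μ(a)). -/
theorem stmt_2 {A : Type*} [Fintype A] [Nonempty A]
    (α : ℝ) (hα : 0 < α)
    (μ Q : A → ℝ) (hμpos : ∀ a, 0 < μ a) (hμsum : ∑ a, μ a = 1)
    (Vstar : ℝ)
    (hV : Vstar = (1 / α) * Real.log (∑ a, Real.exp (α * Q a + Real.log (μ a)))) :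
    ∀ V : ℝ, V ≠ Vstar →
      ∑ a, μ a * (Real.exp (α * (Q a - Vstar)) - α * (Q a - Vstar)) <
      ∑ a, μ a * (Real.exp (α * (Q a - V)) - α * (Q a - V)) := by
  intro V hne
  set S : ℝ := ∑ a, Real.exp (α * Q a + Real.log (μ a)) with hS
  have hSpos : 0 < S := Finset.sum_pos (fun a _ => Real.exp_pos _) Finset.univ_nonempty
  have hαne : α ≠ 0 := ne_of_gt hα
  have hexpV : Real.exp (α * Vstar) = S := by
    rw [hV, show α * (1 / α * Real.log S) = Real.log S by field_simp,
      Real.exp_log hSpos]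
  have hsum : ∀ W : ℝ, (∑ a, μ a * (Real.exp (α * (Q a - W)) - α * (Q a - W))) =
      S * Real.exp (-(α * W)) + α * W - α * ∑ a, μ a * Q a := by
    intro W
    have hcong : ∀ a ∈ Finset.univ, μ a * (Real.exp (α * (Q a - W)) - α * (Q a - W)) =
        Real.exp (α * Q a + Real.log (μ a)) * Real.exp (-(α * W))
          + (α * W * μ a - α * (μ a * Q a)) := by
      intro a _
      have hμa : Real.exp (α * Q a + Real.log (μ a)) = μ a * Real.exp (α * Q a) := by
        rw [Real.exp_add, Real.exp_log (hμpos a)]; ring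
      have e : Real.exp (α * (Q a - W)) = Real.exp (α * Q a) * Real.exp (-(α * W)) := by
        rw [← Real.exp_add]; ring_nf
      rw [hμa, e]; ring
    rw [Finset.sum_congr rfl hcong, Finset.sum_add_distrib, ← Finset.sum_mul,
      Finset.sum_sub_distrib, ← Finset.mul_sum, ← Finset.mul_sum, hμsum]
    ring
  rw [hsum Vstar, hsum V]
  have h1 : S * Real.exp (-(α * Vstar)) = 1 := by
    rw [← hexpV, ← Real.exp_add]; simp
  have h2 : S * Real.exp (-(α * V)) = Real.exp (α * Vstar - α * V) := by
    rw [← hexpV, ← Real.exp_add]; ring_nf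
  rw [h1, h2]
  have hx : α * Vstar - α * V ≠ 0 := by
    intro h
    apply hne
    have := sub_eq_zero.mp h
    exact (mul_left_cancel₀ hαne this.symm)
  have := Real.add_one_lt_exp hx
  linarith
end

section
/- Fix a finite action set A, a probability mass function μ with μ(a) > 0 for all a, and Q : A → ℝ. As τ → 1⁻, the τ-expectile V_τ of Q under μ (the minimizer of V ↦ ∑_a μ(a)·|τ − 𝟙(Q(a)<V)|·(Q(a)−V)²) converges to max_a Q(a). Moreover V_τ is monotonically nondecreasing in τ and V_{1/2} = ∑_a μ(a)·Q(a). -/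
theorem stmt_8 {A : Type*} [Fintype A] [Nonempty A]
    (μ Q : A → ℝ) (hμpos : ∀ a, 0 < μ a) (hμsum : ∑ a, μ a = 1)
    (V : ℝ → ℝ)
    (hV : ∀ τ ∈ Set.Ioo (0 : ℝ) 1, ∀ W : ℝ,
      ∑ a, μ a * (|τ - if Q a < V τ then 1 else 0| * (Q a - V τ) ^ 2) ≤
      ∑ a, μ a * (|τ - if Q a < W then 1 else 0| * (Q a - W) ^ 2)) :
    Filter.Tendsto V (nhdsWithin 1 (Set.Iio 1)) (nhds (Finset.univ.sup' Finset.univ_nonempty Q)) ∧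
    (∀ τ₁ ∈ Set.Ioo (0 : ℝ) 1, ∀ τ₂ ∈ Set.Ioo (0 : ℝ) 1, τ₁ ≤ τ₂ → V τ₁ ≤ V τ₂) ∧
    V (1 / 2) = ∑ a, μ a * Q a := by
  classical
  set M := Finset.univ.sup' Finset.univ_nonempty Q with hM
  obtain ⟨a₀, -, ha₀⟩ := Finset.exists_mem_eq_sup' Finset.univ_nonempty Q
  have hQle : ∀ a, Q a ≤ M := fun a => Finset.le_sup' Q (Finset.mem_univ a)
  -- rewrite the absolute value weight
  have habs : ∀ τ ∈ Set.Ioo (0:ℝ) 1, ∀ x W : ℝ,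
      |τ - if x < W then (1:ℝ) else 0| = if x < W then 1 - τ else τ := by
    intro τ hτ x W
    by_cases h : x < W
    · rw [if_pos h, if_pos h, abs_of_nonpos (by linarith [hτ.2])]; ring
    · rw [if_neg h, if_neg h, sub_zero, abs_of_nonneg hτ.1.le]
  have hL : ∀ τ ∈ Set.Ioo (0:ℝ) 1, ∀ W : ℝ,
      ∑ a, μ a * (|τ - if Q a < W then (1:ℝ) else 0| * (Q a - W) ^ 2) =
      ∑ a, μ a * ((if Q a < W then 1 - τ else τ) * (Q a - W) ^ 2) := fun τ hτ W =>
    Finset.sum_congr rfl fun a _ => by rw [habs τ hτ]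
  have hAB : ∀ τ W : ℝ,
      ∑ a, μ a * ((if Q a < W then 1 - τ else τ) * (Q a - W) ^ 2) =
      τ * (∑ a, μ a * (if Q a < W then 0 else (Q a - W) ^ 2)) +
      (1 - τ) * (∑ a, μ a * (if Q a < W then (Q a - W) ^ 2 else 0)) := by
    intro τ W
    rw [Finset.mul_sum, Finset.mul_sum, ← Finset.sum_add_distrib]
    refine Finset.sum_congr rfl fun a _ => ?_
    by_cases h : Q a < W <;> simp [h] <;> ring
  -- strict antitonicity of the "gap" function
  have hGmono : ∀ W₁ W₂ : ℝ, W₁ < W₂ →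
      (∑ a, μ a * (if Q a < W₂ then 0 else (Q a - W₂) ^ 2)) -
        (∑ a, μ a * (if Q a < W₂ then (Q a - W₂) ^ 2 else 0)) <
      (∑ a, μ a * (if Q a < W₁ then 0 else (Q a - W₁) ^ 2)) -
        (∑ a, μ a * (if Q a < W₁ then (Q a - W₁) ^ 2 else 0)) := by
    intro W₁ W₂ hW
    rw [← Finset.sum_sub_distrib, ← Finset.sum_sub_distrib]
    refine Finset.sum_lt_sum_of_nonempty Finset.univ_nonempty fun a _ => ?_
    have hμ := hμpos a
    by_cases h1 : Q a < W₁
    · have h2 : Q a < W₂ := h1.trans hW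
      simp only [if_pos h1, if_pos h2]
      nlinarith [mul_pos hμ (mul_pos (sub_pos.2 hW)
        (show (0:ℝ) < W₁ + W₂ - 2 * Q a by linarith))]
    · by_cases h2 : Q a < W₂
      · simp only [if_neg h1, if_pos h2]
        nlinarith [mul_pos hμ (mul_pos (sub_pos.2 h2) (sub_pos.2 h2)),
          mul_nonneg hμ.le (sq_nonneg (Q a - W₁))]
      · simp only [if_neg h1, if_neg h2]
        push_neg at h2
        nlinarith [mul_pos hμ (mul_pos (sub_pos.2 hW)
          (show (0:ℝ) < 2 * Q a - W₁ - W₂ by linarith))]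
  -- upper bound : V τ ≤ M
  have hub : ∀ τ ∈ Set.Ioo (0:ℝ) 1, V τ ≤ M := by
    intro τ hτ
    by_contra h
    push_neg at h
    have hmin := hV τ hτ M
    rw [hL τ hτ (V τ), hL τ hτ M] at hmin
    have hlt : ∑ a, μ a * ((if Q a < M then 1 - τ else τ) * (Q a - M) ^ 2) <
        ∑ a, μ a * ((if Q a < V τ then 1 - τ else τ) * (Q a - V τ) ^ 2) := by
      refine Finset.sum_lt_sum_of_nonempty Finset.univ_nonempty fun a _ => ?_
      have hμ := hμpos a
      have hQ := hQle a
      have hVa : Q a < V τ := lt_of_le_of_lt hQ h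
      rw [if_pos hVa]
      by_cases h1 : Q a < M
      · rw [if_pos h1]
        nlinarith [mul_pos (mul_pos hμ (sub_pos.2 hτ.2))
          (mul_pos (sub_pos.2 h) (show (0:ℝ) < V τ + M - 2 * Q a by linarith))]
      · rw [if_neg h1]
        have hEq : Q a = M := le_antisymm hQ (not_lt.mp h1)
        rw [hEq]
        nlinarith [mul_pos (mul_pos hμ (sub_pos.2 hτ.2))
          (mul_pos (sub_pos.2 h) (sub_pos.2 h))]
    linarith
  -- monotonicity
  have hmono : ∀ τ₁ ∈ Set.Ioo (0:ℝ) 1, ∀ τ₂ ∈ Set.Ioo (0:ℝ) 1, τ₁ ≤ τ₂ → V τ₁ ≤ V τ₂ := by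
    intro τ₁ h₁ τ₂ h₂ hle
    rcases eq_or_lt_of_le hle with rfl | hlt
    · exact le_refl _
    by_contra hc
    push_neg at hc
    have i1 := hV τ₁ h₁ (V τ₂)
    have i2 := hV τ₂ h₂ (V τ₁)
    rw [hL τ₁ h₁ (V τ₁), hL τ₁ h₁ (V τ₂), hAB τ₁ (V τ₁), hAB τ₁ (V τ₂)] at i1
    rw [hL τ₂ h₂ (V τ₂), hL τ₂ h₂ (V τ₁), hAB τ₂ (V τ₂), hAB τ₂ (V τ₁)] at i2
    have hG := hGmono (V τ₂) (V τ₁) hc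
    nlinarith [mul_pos (sub_pos.2 hlt) (sub_pos.2 hG), i1, i2]
  refine ⟨?_, hmono, ?_⟩
  · -- tendsto
    rw [Metric.tendsto_nhds]
    intro ε hε
    have hK : 0 < μ a₀ * ε ^ 2 := mul_pos (hμpos a₀) (pow_pos hε 2)
    set C := ∑ a, μ a * (Q a - M) ^ 2 with hCdef
    have hC0 : 0 ≤ C := Finset.sum_nonneg fun a _ => mul_nonneg (hμpos a).le (sq_nonneg _)
    set t := max (1/2 : ℝ) (C / (C + μ a₀ * ε ^ 2)) with ht
    have ht1 : t < 1 := by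
      apply max_lt
      · norm_num
      · rw [div_lt_one (by linarith)]
        linarith
    filter_upwards [Ioo_mem_nhdsLT_of_mem (show (1:ℝ) ∈ Set.Ioc t 1 from ⟨ht1, le_refl _⟩)]
      with τ hτm
    have hhalf : (1/2 : ℝ) ≤ t := by rw [ht]; exact le_max_left _ _
    have hτ : τ ∈ Set.Ioo (0:ℝ) 1 := ⟨by linarith [hτm.1], hτm.2⟩
    have hVle := hub τ hτ
    rw [Real.dist_eq, abs_sub_comm, abs_of_nonneg (by linarith)]
    by_contra hcon
    push_neg at hcon
    -- lower bound on the loss at V τ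
    have hVa₀ : ¬ Q a₀ < V τ := not_lt.mpr (by rw [← ha₀]; linarith)
    have hlow : τ * (μ a₀ * ε ^ 2) ≤
        ∑ a, μ a * ((if Q a < V τ then 1 - τ else τ) * (Q a - V τ) ^ 2) := by
      have hterm : τ * (μ a₀ * ε ^ 2) ≤
          μ a₀ * ((if Q a₀ < V τ then 1 - τ else τ) * (Q a₀ - V τ) ^ 2) := by
        rw [if_neg hVa₀, ← ha₀]
        nlinarith [mul_nonneg (mul_pos hτ.1 (hμpos a₀)).le
          (mul_nonneg (sub_nonneg.2 hcon) (show (0:ℝ) ≤ M - V τ + ε by linarith))]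
      refine hterm.trans (Finset.single_le_sum
          (f := fun a => μ a * ((if Q a < V τ then 1 - τ else τ) * (Q a - V τ) ^ 2))
          (fun a _ => ?_) (Finset.mem_univ a₀))
      have hμ := (hμpos a).le
      split
      · exact mul_nonneg hμ (mul_nonneg (by linarith [hτ.2]) (sq_nonneg _))
      · exact mul_nonneg hμ (mul_nonneg hτ.1.le (sq_nonneg _))
    -- upper bound on the loss at M
    have hupp : ∑ a, μ a * ((if Q a < M then 1 - τ else τ) * (Q a - M) ^ 2) ≤ (1 - τ) * C := by
      rw [hCdef, Finset.mul_sum]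
      refine Finset.sum_le_sum fun a _ => ?_
      by_cases hA : Q a < M
      · rw [if_pos hA]
        exact le_of_eq (by ring)
      · rw [if_neg hA]
        have hEq : Q a = M := le_antisymm (hQle a) (not_lt.mp hA)
        rw [hEq]
        simp
    have hchain := hV τ hτ M
    rw [hL τ hτ (V τ), hL τ hτ M] at hchain
    have hfinal : τ * (μ a₀ * ε ^ 2) ≤ (1 - τ) * C := le_trans hlow (le_trans hchain hupp)
    have htg : C / (C + μ a₀ * ε ^ 2) < τ :=
      lt_of_le_of_lt (by rw [ht]; exact le_max_right _ _) hτm.1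
    have hCC : C < τ * (C + μ a₀ * ε ^ 2) := by
      rwa [div_lt_iff₀ (by linarith)] at htg
    nlinarith
  · -- V (1/2) is the mean
    have h12 : (1/2 : ℝ) ∈ Set.Ioo (0:ℝ) 1 := by norm_num
    have key := hV (1/2) h12 (∑ a, μ a * Q a)
    have e1 : ∀ W : ℝ,
        ∑ a, μ a * (|1/2 - if Q a < W then (1:ℝ) else 0| * (Q a - W) ^ 2) =
        (1/2) * ∑ a, μ a * (Q a - W) ^ 2 := by
      intro W
      rw [Finset.mul_sum]
      refine Finset.sum_congr rfl fun a _ => ?_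
      by_cases h : Q a < W
      · rw [if_pos h, show |(1:ℝ)/2 - 1| = 1/2 by rw [abs_of_nonpos] <;> norm_num]
        ring
      · rw [if_neg h, sub_zero, abs_of_nonneg (by norm_num : (0:ℝ) ≤ 1/2)]
        ring
    rw [e1, e1] at key
    set m := ∑ a, μ a * Q a with hm
    have expand : ∑ a, μ a * (Q a - V (1/2)) ^ 2 =
        ∑ a, μ a * (Q a - m) ^ 2 + (m - V (1/2)) ^ 2 := by
      have step : ∀ a, μ a * (Q a - V (1/2)) ^ 2 =
          μ a * (Q a - m) ^ 2 + ((m - V (1/2)) * 2) * (μ a * Q a) -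
          ((m - V (1/2)) * (V (1/2) + m)) * μ a := fun a => by ring
      rw [Finset.sum_congr rfl fun a _ => step a]
      rw [Finset.sum_sub_distrib, Finset.sum_add_distrib, ← Finset.mul_sum, ← Finset.mul_sum,
        hμsum, ← hm]
      ring
    have h0 : (m - V (1/2)) ^ 2 = 0 := le_antisymm (by linarith) (sq_nonneg _)
    have := (pow_eq_zero_iff two_ne_zero).mp h0
    linarith [sub_eq_zero.mp this]
end

section
/- Fix a finite action set A, a probability mass function μ with μ(a) > 0 for all a, Q : A → ℝ, and τ ∈ (0,1). The τ-expectile V_τ of Q under μ satisfies min_a Q(a) ≤ V_τ ≤ max_a Q(a), and if Q is not constant then the inequalities with min and max are strict. -/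
section Aux

variable {A : Type*} [Fintype A] [Nonempty A]

/-- The asymmetric squared loss. -/
noncomputable def expLoss (μ Q : A → ℝ) (τ W : ℝ) : ℝ :=
  ∑ a, μ a * (|τ - if Q a < W then 1 else 0| * (Q a - W) ^ 2)

lemma expLoss_neg (μ Q : A → ℝ) (τ : ℝ) (hτ : τ ∈ Set.Ioo (0 : ℝ) 1) (X : ℝ) :
    expLoss μ (fun a => -Q a) (1 - τ) X = expLoss μ Q τ (-X) := by
  obtain ⟨hτ0, hτ1⟩ := hτ
  unfold expLoss
  refine Finset.sum_congr rfl fun a _ => ?_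
  dsimp only
  rcases lt_trichotomy (Q a) (-X) with h | h | h
  · rw [if_neg (by linarith : ¬ -Q a < X), if_pos h, sub_zero,
      abs_of_pos (by linarith : (0:ℝ) < 1 - τ), abs_of_neg (by linarith : τ - 1 < 0)]
    ring
  · rw [show -Q a - X = 0 by linarith, show Q a - -X = 0 by linarith]
    ring
  · rw [if_pos (by linarith : -Q a < X), if_neg (by linarith : ¬ Q a < -X),
      abs_of_neg (show (1 - τ) - 1 < 0 by linarith), sub_zero, abs_of_pos hτ0]
    ring

/-- Nonstrict lower bound. -/
lemma expLoss_inf_le (μ Q : A → ℝ) (hμpos : ∀ a, 0 < μ a)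
    (τ : ℝ) (hτ : τ ∈ Set.Ioo (0 : ℝ) 1) (Vτ : ℝ)
    (hVτ : ∀ W : ℝ, expLoss μ Q τ Vτ ≤ expLoss μ Q τ W) :
    Finset.univ.inf' Finset.univ_nonempty Q ≤ Vτ := by
  obtain ⟨hτ0, hτ1⟩ := hτ
  set m := Finset.univ.inf' Finset.univ_nonempty Q with hm
  by_contra h
  push_neg at h
  have hkey : expLoss μ Q τ m < expLoss μ Q τ Vτ := by
    unfold expLoss
    refine Finset.sum_lt_sum_of_nonempty Finset.univ_nonempty fun a _ => ?_
    have hQa : m ≤ Q a := Finset.inf'_le _ (Finset.mem_univ a)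
    rw [if_neg (by linarith : ¬ Q a < m), if_neg (by linarith : ¬ Q a < Vτ)]
    have hμ := hμpos a
    have h1 : (Q a - m) ^ 2 < (Q a - Vτ) ^ 2 := by nlinarith
    rw [sub_zero, abs_of_pos hτ0,
      show μ a * (τ * (Q a - m) ^ 2) = (μ a * τ) * (Q a - m) ^ 2 by ring,
      show μ a * (τ * (Q a - Vτ) ^ 2) = (μ a * τ) * (Q a - Vτ) ^ 2 by ring]
    exact mul_lt_mul_of_pos_left h1 (mul_pos hμ hτ0)
  exact absurd (hVτ m) (not_le.mpr hkey)

/-- Strict lower bound given a point strictly above the min. -/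
lemma expLoss_inf_lt (μ Q : A → ℝ) (hμpos : ∀ a, 0 < μ a) (hμsum : ∑ a, μ a = 1)
    (τ : ℝ) (hτ : τ ∈ Set.Ioo (0 : ℝ) 1) (Vτ : ℝ)
    (hVτ : ∀ W : ℝ, expLoss μ Q τ Vτ ≤ expLoss μ Q τ W)
    (b : A) (hb : Finset.univ.inf' Finset.univ_nonempty Q < Q b) :
    Finset.univ.inf' Finset.univ_nonempty Q < Vτ := by
  classical
  obtain ⟨hτ0, hτ1⟩ := hτ
  set m := Finset.univ.inf' Finset.univ_nonempty Q with hm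
  have hle : m ≤ Vτ := expLoss_inf_le μ Q hμpos τ ⟨hτ0, hτ1⟩ Vτ hVτ
  rcases lt_or_eq_of_le hle with h | h
  · exact h
  exfalso
  -- Vτ = m; perturb upward
  set δ := Q b - m with hδdef
  have hδ : 0 < δ := by simp [hδdef]; linarith
  have hμb := hμpos b
  have hN : 0 < μ b * τ * δ := mul_pos (mul_pos hμb hτ0) hδ
  set ε := min δ (μ b * τ * δ / (2 * (1 - τ))) with hεdef
  have hε0 : 0 < ε := lt_min hδ (div_pos hN (by linarith))
  have hεδ : ε ≤ δ := min_le_left _ _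
  have hεsmall : (1 - τ) * ε < μ b * τ * δ := by
    have h2 : ε ≤ μ b * τ * δ / (2 * (1 - τ)) := min_le_right _ _
    have h4 : (1 - τ) * (μ b * τ * δ / (2 * (1 - τ))) = μ b * τ * δ / 2 := by
      have hne : (1:ℝ) - τ ≠ 0 := by linarith
      field_simp
    have h5 : (1 - τ) * ε ≤ μ b * τ * δ / 2 := by
      calc (1 - τ) * ε ≤ (1 - τ) * (μ b * τ * δ / (2 * (1 - τ))) :=
            mul_le_mul_of_nonneg_left h2 (by linarith)
        _ = μ b * τ * δ / 2 := h4
    nlinarith [hN, h5]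
  -- termwise bound
  have hterm : ∀ a ∈ Finset.univ,
      μ a * (|τ - if Q a < m + ε then 1 else 0| * (Q a - (m + ε)) ^ 2) ≤
      μ a * (τ * (Q a - m) ^ 2) + μ a * ((1 - τ) * ε ^ 2)
        - (if a = b then μ b * (τ * δ * ε) else 0) := by
    intro a _
    have hQa : m ≤ Q a := Finset.inf'_le _ (Finset.mem_univ a)
    have hμa := hμpos a
    by_cases hab : a = b
    · subst hab
      rw [if_pos rfl]
      have hQb : Q a = m + δ := by rw [hδdef]; ring
      rw [if_neg (by rw [hQb]; linarith)]
      rw [sub_zero, abs_of_pos hτ0, hQb]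
      have h1 : (m + δ - (m + ε)) = δ - ε := by ring
      have h2 : (m + δ - m) = δ := by ring
      rw [h1, h2]
      nlinarith [mul_nonneg hμa.le (mul_nonneg hτ0.le (mul_nonneg hε0.le (sub_nonneg.mpr hεδ))),
        mul_nonneg hμa.le (mul_nonneg (by linarith : (0:ℝ) ≤ 1 - τ) (sq_nonneg ε))]
    · rw [if_neg hab, sub_zero]
      by_cases hlt : Q a < m + ε
      · rw [if_pos hlt, abs_of_neg (by linarith : τ - 1 < 0)]
        nlinarith [mul_nonneg (mul_nonneg hμa.le (by linarith : (0:ℝ) ≤ 1 - τ))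
            (mul_nonneg (by linarith : (0:ℝ) ≤ ε - (Q a - (m + ε)))
              (by linarith : (0:ℝ) ≤ ε + (Q a - (m + ε)))),
          mul_nonneg hμa.le (mul_nonneg hτ0.le (sq_nonneg (Q a - m)))]
      · rw [if_neg hlt, sub_zero, abs_of_pos hτ0]
        push_neg at hlt
        nlinarith [mul_nonneg (mul_nonneg hμa.le hτ0.le)
            (mul_nonneg hε0.le (by linarith : (0:ℝ) ≤ 2 * (Q a - m) - ε)),
          mul_nonneg hμa.le (mul_nonneg (by linarith : (0:ℝ) ≤ 1 - τ) (sq_nonneg ε))]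
  have hsum : expLoss μ Q τ (m + ε) ≤
      expLoss μ Q τ m + (1 - τ) * ε ^ 2 - μ b * (τ * δ * ε) := by
    have h1 := Finset.sum_le_sum hterm
    unfold expLoss
    have h2 : ∑ a, (μ a * (τ * (Q a - m) ^ 2) + μ a * ((1 - τ) * ε ^ 2)
        - (if a = b then μ b * (τ * δ * ε) else 0))
        = (∑ a, μ a * (τ * (Q a - m) ^ 2)) + (1 - τ) * ε ^ 2 - μ b * (τ * δ * ε) := by
      rw [Finset.sum_sub_distrib, Finset.sum_add_distrib]
      rw [Finset.sum_ite_eq' Finset.univ b (fun _ => μ b * (τ * δ * ε))]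
      rw [if_pos (Finset.mem_univ b)]
      have h6 : ∑ a, μ a * ((1 - τ) * ε ^ 2) = (1 - τ) * ε ^ 2 := by
        rw [← Finset.sum_mul, hμsum, one_mul]
      rw [h6]
    have h3 : ∑ a, μ a * (|τ - if Q a < m then 1 else 0| * (Q a - m) ^ 2)
        = ∑ a, μ a * (τ * (Q a - m) ^ 2) := by
      refine Finset.sum_congr rfl fun a _ => ?_
      have hQa : m ≤ Q a := Finset.inf'_le _ (Finset.mem_univ a)
      rw [if_neg (by linarith : ¬ Q a < m), sub_zero, abs_of_pos hτ0]
    rw [h2] at h1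
    rw [h3]
    linarith
  have hfinal : expLoss μ Q τ (m + ε) < expLoss μ Q τ m := by
    have hq : (1 - τ) * ε ^ 2 < μ b * (τ * δ * ε) := by nlinarith
    linarith
  rw [← h] at hVτ
  exact absurd (hVτ (m + ε)) (not_le.mpr hfinal)

lemma inf'_neg_eq (Q : A → ℝ) :
    Finset.univ.inf' Finset.univ_nonempty (fun a => -Q a)
      = - Finset.univ.sup' Finset.univ_nonempty Q := by
  apply le_antisymm
  · obtain ⟨b, _, hb⟩ := Finset.exists_mem_eq_sup' Finset.univ_nonempty Q
    calc Finset.univ.inf' Finset.univ_nonempty (fun a => -Q a) ≤ -Q b :=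
          Finset.inf'_le _ (Finset.mem_univ b)
      _ = - Finset.univ.sup' Finset.univ_nonempty Q := by rw [hb]
  · refine Finset.le_inf' _ _ fun a _ => ?_
    simp only [neg_le_neg_iff]
    exact Finset.le_sup' Q (Finset.mem_univ a)

end Aux

theorem stmt_9 {A : Type*} [Fintype A] [Nonempty A]
    (μ Q : A → ℝ) (hμpos : ∀ a, 0 < μ a) (hμsum : ∑ a, μ a = 1)
    (τ : ℝ) (hτ : τ ∈ Set.Ioo (0 : ℝ) 1)
    (Vτ : ℝ)
    (hVτ : ∀ W : ℝ,
      ∑ a, μ a * (|τ - if Q a < Vτ then 1 else 0| * (Q a - Vτ) ^ 2) ≤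
      ∑ a, μ a * (|τ - if Q a < W then 1 else 0| * (Q a - W) ^ 2)) :
    (Finset.univ.inf' Finset.univ_nonempty Q ≤ Vτ ∧
      Vτ ≤ Finset.univ.sup' Finset.univ_nonempty Q) ∧
    ((¬ ∀ a b, Q a = Q b) →
      Finset.univ.inf' Finset.univ_nonempty Q < Vτ ∧
      Vτ < Finset.univ.sup' Finset.univ_nonempty Q) := by
  obtain ⟨hτ0, hτ1⟩ := hτ
  have hVτ' : ∀ W : ℝ, expLoss μ Q τ Vτ ≤ expLoss μ Q τ W := hVτ
  have hτ' : (1 - τ) ∈ Set.Ioo (0:ℝ) 1 := ⟨by linarith, by linarith⟩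
  -- negated hypothesis
  have hVτneg : ∀ W : ℝ, expLoss μ (fun a => -Q a) (1 - τ) (-Vτ)
      ≤ expLoss μ (fun a => -Q a) (1 - τ) W := by
    intro W
    rw [expLoss_neg μ Q τ ⟨hτ0, hτ1⟩, expLoss_neg μ Q τ ⟨hτ0, hτ1⟩, neg_neg]
    exact hVτ' (-W)
  have hlow : Finset.univ.inf' Finset.univ_nonempty Q ≤ Vτ :=
    expLoss_inf_le μ Q hμpos τ ⟨hτ0, hτ1⟩ Vτ hVτ'
  have hup : Vτ ≤ Finset.univ.sup' Finset.univ_nonempty Q := by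
    have := expLoss_inf_le μ (fun a => -Q a) hμpos (1 - τ) hτ' (-Vτ) hVτneg
    rw [inf'_neg_eq] at this
    linarith
  refine ⟨⟨hlow, hup⟩, fun hnc => ?_⟩
  push_neg at hnc
  obtain ⟨a, b, hab⟩ := hnc
  have hmina : Finset.univ.inf' Finset.univ_nonempty Q ≤ Q a :=
    Finset.inf'_le _ (Finset.mem_univ a)
  have hminb : Finset.univ.inf' Finset.univ_nonempty Q ≤ Q b :=
    Finset.inf'_le _ (Finset.mem_univ b)
  have hmaxa : Q a ≤ Finset.univ.sup' Finset.univ_nonempty Q :=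
    Finset.le_sup' Q (Finset.mem_univ a)
  have hmaxb : Q b ≤ Finset.univ.sup' Finset.univ_nonempty Q :=
    Finset.le_sup' Q (Finset.mem_univ b)
  have habove : ∃ c, Finset.univ.inf' Finset.univ_nonempty Q < Q c := by
    rcases lt_or_gt_of_ne hab with h | h
    · exact ⟨b, by linarith⟩
    · exact ⟨a, by linarith⟩
  have hbelow : ∃ c, Q c < Finset.univ.sup' Finset.univ_nonempty Q := by
    rcases lt_or_gt_of_ne hab with h | h
    · exact ⟨a, by linarith⟩
    · exact ⟨b, by linarith⟩
  obtain ⟨c, hc⟩ := habove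
  obtain ⟨d, hd⟩ := hbelow
  constructor
  · exact expLoss_inf_lt μ Q hμpos hμsum τ ⟨hτ0, hτ1⟩ Vτ hVτ' c hc
  · have hd' : Finset.univ.inf' Finset.univ_nonempty (fun a => -Q a) < -Q d := by
      rw [inf'_neg_eq]; linarith
    have := expLoss_inf_lt μ (fun a => -Q a) hμpos hμsum (1 - τ) hτ' (-Vτ) hVτneg d hd'
    rw [inf'_neg_eq] at this
    linarith
end

section
/- Fix τ ∈ (0,1), a finite action set A, a probability mass function μ with μ(a) > 0, Q : A → ℝ, and let V_τ be the τ-expectile of Q under μ with Q(a) ≠ V_τ for all a. Define π(a) ∝ μ(a)·|τ − 𝟙(Q(a) < V_τ)|. Then ∑_a π(a)·Q(a) = V_τ, i.e., the τ-expectile equals the mean of Q under the reweighted implicit policy. -/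
theorem stmt_10 {A : Type*} [Fintype A] [Nonempty A]
    (τ : ℝ) (hτ : τ ∈ Set.Ioo (0 : ℝ) 1)
    (μ Q : A → ℝ) (hμpos : ∀ a, 0 < μ a) (hμsum : ∑ a, μ a = 1)
    (Vτ : ℝ)
    (hVτ : ∀ W : ℝ,
      ∑ a, μ a * (|τ - if Q a < Vτ then 1 else 0| * (Q a - Vτ) ^ 2) ≤
      ∑ a, μ a * (|τ - if Q a < W then 1 else 0| * (Q a - W) ^ 2))
    (hQ : ∀ a, Q a ≠ Vτ)
    (Z : ℝ) (hZ : Z = ∑ a, μ a * |τ - if Q a < Vτ then 1 else 0|)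
    (π : A → ℝ) (hπ : ∀ a, π a = μ a * |τ - if Q a < Vτ then 1 else 0| / Z) :
    ∑ a, π a * Q a = Vτ := by
  obtain ⟨hτ0, hτ1⟩ := hτ
  set c : A → ℝ := fun a => |τ - if Q a < Vτ then 1 else 0| with hc
  have hcpos : ∀ a, 0 < c a := by
    intro a
    simp only [hc]
    split
    · rw [abs_sub_comm, abs_of_pos (by linarith)]; linarith
    · rw [sub_zero, abs_of_pos hτ0]; exact hτ0
  have hZpos : 0 < Z := by
    rw [hZ]
    exact Finset.sum_pos (fun a _ => mul_pos (hμpos a) (hcpos a)) Finset.univ_nonempty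
  set S : ℝ := ∑ a, μ a * c a * (Q a - Vτ) with hS
  have hS0 : S = 0 := by
    by_contra hne
    have hSpos : 0 < |S| := abs_pos.mpr hne
    set δ : ℝ := Finset.univ.inf' Finset.univ_nonempty (fun a => |Q a - Vτ|) with hδ
    have hδpos : 0 < δ :=
      (Finset.lt_inf'_iff _).mpr fun a _ => abs_pos.mpr (sub_ne_zero.mpr (hQ a))
    have hδle : ∀ a, δ ≤ |Q a - Vτ| := fun a => Finset.inf'_le _ (Finset.mem_univ a)
    set t : ℝ := min (δ / (2 * |S|)) (1 / Z) with ht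
    have ht0 : 0 < t := lt_min (div_pos hδpos (by positivity)) (by positivity)
    have htZ : t * Z ≤ 1 := by
      calc t * Z ≤ (1 / Z) * Z := by
            exact mul_le_mul_of_nonneg_right (min_le_right _ _) hZpos.le
        _ = 1 := by field_simp
    set h : ℝ := S * t with hh
    have habs : |h| < δ := by
      have : |h| = |S| * t := by rw [hh, abs_mul, abs_of_pos ht0]
      rw [this]
      have : |S| * t ≤ |S| * (δ / (2 * |S|)) :=
        mul_le_mul_of_nonneg_left (min_le_left _ _) hSpos.le
      have heq : |S| * (δ / (2 * |S|)) = δ / 2 := by field_simp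
      linarith [half_lt_self hδpos]
    have hind : ∀ a, (Q a < Vτ + h) ↔ (Q a < Vτ) := by
      intro a
      have hd := hδle a
      have hab := abs_lt.mp habs
      rcases lt_or_gt_of_ne (hQ a) with hlt | hgt
      · have : |Q a - Vτ| = Vτ - Q a := by rw [abs_of_neg (by linarith)]; ring
        constructor <;> intro _ <;> linarith
      · have : |Q a - Vτ| = Q a - Vτ := abs_of_pos (by linarith)
        constructor <;> intro _ <;> linarith
    have key := hVτ (Vτ + h)
    have hrw : ∑ a, μ a * (|τ - if Q a < Vτ + h then 1 else 0| * (Q a - (Vτ + h)) ^ 2)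
        = ∑ a, μ a * (c a * (Q a - Vτ) ^ 2) - 2 * h * S + h ^ 2 * Z := by
      have : ∀ a ∈ Finset.univ,
          μ a * (|τ - if Q a < Vτ + h then 1 else 0| * (Q a - (Vτ + h)) ^ 2)
          = μ a * (c a * (Q a - Vτ) ^ 2) - 2 * h * (μ a * c a * (Q a - Vτ))
            + h ^ 2 * (μ a * c a) := by
        intro a _
        simp only [hc, hind a]
        ring
      rw [Finset.sum_congr rfl this, Finset.sum_add_distrib, Finset.sum_sub_distrib,
        ← Finset.mul_sum, ← Finset.mul_sum, hS, hZ]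
    rw [hrw] at key
    have h1 : (0:ℝ) ≤ -2 * h * S + h ^ 2 * Z := by linarith
    have h2 : h * S = S ^ 2 * t := by rw [hh]; ring
    have h3 : h ^ 2 * Z = S ^ 2 * t * (t * Z) := by rw [hh]; ring
    have hS2 : 0 < S ^ 2 := by positivity
    nlinarith [mul_pos hS2 ht0]
  have hsum : ∑ a, μ a * c a * Q a = Vτ * Z := by
    have : ∑ a, μ a * c a * Q a - Vτ * Z = S := by
      rw [hS, hZ, Finset.mul_sum, ← Finset.sum_sub_distrib]
      apply Finset.sum_congr rfl
      intro a _
      simp only [hc]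
      ring
    linarith [this, hS0]
  calc ∑ a, π a * Q a = ∑ a, μ a * c a * Q a / Z := by
        apply Finset.sum_congr rfl
        intro a _
        rw [hπ a]
        simp only [hc]
        ring
    _ = (∑ a, μ a * c a * Q a) / Z := by rw [← Finset.sum_div]
    _ = Vτ := by rw [hsum]; field_simp
end

section
/- Fix α > 0, a finite action set A, a probability mass function μ with μ(a) > 0, Q : A → ℝ, and let V = (1/α)·log ∑_a μ(a)·exp(α·Q(a)) with Q(a) ≠ V for all a. Define w(a) = α·|exp(α(Q(a) − V)) − 1| / |Q(a) − V| and π(a) = μ(a)·w(a)/Z with Z = ∑_b μ(b)·w(b). Then ∑_a π(a)·Q(a) = V. -/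
theorem stmt_11 {A : Type*} [Fintype A] [Nonempty A]
    (α : ℝ) (hα : 0 < α)
    (μ Q : A → ℝ) (hμpos : ∀ a, 0 < μ a) (hμsum : ∑ a, μ a = 1)
    (V : ℝ) (hV : V = (1 / α) * Real.log (∑ a, μ a * Real.exp (α * Q a)))
    (hQ : ∀ a, Q a ≠ V)
    (w : A → ℝ)
    (hw : ∀ a, w a = α * |Real.exp (α * (Q a - V)) - 1| / |Q a - V|)
    (Z : ℝ) (hZ : Z = ∑ b, μ b * w b)
    (π : A → ℝ) (hπ : ∀ a, π a = μ a * w a / Z) :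
    ∑ a, π a * Q a = V := by
  -- S = ∑ μ exp(αQ) is positive
  set S := ∑ a, μ a * Real.exp (α * Q a) with hS
  have hSpos : 0 < S := by
    apply Finset.sum_pos
    · intro a _
      exact mul_pos (hμpos a) (Real.exp_pos _)
    · exact Finset.univ_nonempty
  have hexpV : Real.exp (α * V) = S := by
    rw [hV]
    have : α * ((1 / α) * Real.log S) = Real.log S := by
      field_simp
    rw [this, Real.exp_log hSpos]
  -- ∑ μ a * exp(α(Q a − V)) = 1
  have hsum1 : ∑ a, μ a * Real.exp (α * (Q a - V)) = 1 := by
    have : ∀ a, μ a * Real.exp (α * (Q a - V)) = (μ a * Real.exp (α * Q a)) / S := by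
      intro a
      rw [mul_sub, Real.exp_sub, hexpV]
      ring
    rw [Finset.sum_congr rfl fun a _ => this a, ← Finset.sum_div, ← hS,
      div_self (ne_of_gt hSpos)]
  -- key: w a * (Q a − V) = α (exp(α(Q a − V)) − 1)
  have key : ∀ a, w a * (Q a - V) = α * (Real.exp (α * (Q a - V)) - 1) := by
    intro a
    rw [hw a]
    obtain ⟨u, hu⟩ : ∃ u, Q a - V = u := ⟨_, rfl⟩
    rw [hu]
    have hune : u ≠ 0 := hu ▸ sub_ne_zero.mpr (hQ a)
    rcases lt_or_gt_of_ne hune with hlt | hgt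
    · have he : Real.exp (α * u) < 1 := by
        rw [← Real.exp_zero]
        exact Real.exp_lt_exp.mpr (by nlinarith)
      rw [abs_of_neg (by linarith : Real.exp (α * u) - 1 < 0), abs_of_neg hlt,
        mul_neg, neg_div_neg_eq, div_mul_cancel₀ _ hune]
    · have he : 1 < Real.exp (α * u) := by
        rw [← Real.exp_zero]
        exact Real.exp_lt_exp.mpr (by nlinarith)
      rw [abs_of_pos (by linarith : 0 < Real.exp (α * u) - 1), abs_of_pos hgt,
        div_mul_cancel₀ _ hune]
  -- w a > 0
  have hwpos : ∀ a, 0 < w a := by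
    intro a
    rw [hw a]
    have hune : Q a - V ≠ 0 := sub_ne_zero.mpr (hQ a)
    have hne : Real.exp (α * (Q a - V)) - 1 ≠ 0 := by
      intro h
      have : Real.exp (α * (Q a - V)) = Real.exp 0 := by
        rw [Real.exp_zero]; linarith
      have := Real.exp_injective this
      exact hune (by
        have : α * (Q a - V) = 0 := this
        rcases mul_eq_zero.mp this with h1 | h2
        · exact absurd h1 (ne_of_gt hα)
        · exact h2)
    exact div_pos (mul_pos hα (abs_pos.mpr hne)) (abs_pos.mpr hune)
  have hZpos : 0 < Z := by
    rw [hZ]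
    apply Finset.sum_pos
    · intro b _
      exact mul_pos (hμpos b) (hwpos b)
    · exact Finset.univ_nonempty
  -- ∑ μ w (Q − V) = 0
  have hsum0 : ∑ a, μ a * w a * (Q a - V) = 0 := by
    have : ∀ a, μ a * w a * (Q a - V) = α * (μ a * Real.exp (α * (Q a - V))) - α * μ a := by
      intro a
      calc μ a * w a * (Q a - V) = μ a * (w a * (Q a - V)) := by ring
        _ = μ a * (α * (Real.exp (α * (Q a - V)) - 1)) := by rw [key a]
        _ = α * (μ a * Real.exp (α * (Q a - V))) - α * μ a := by ring
    rw [Finset.sum_congr rfl fun a _ => this a, Finset.sum_sub_distrib,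
      ← Finset.mul_sum, ← Finset.mul_sum, hsum1, hμsum]
    ring
  have hsumQ : ∑ a, μ a * w a * Q a = V * Z := by
    have : ∑ a, μ a * w a * Q a = ∑ a, (μ a * w a * (Q a - V) + V * (μ a * w a)) := by
      apply Finset.sum_congr rfl
      intro a _
      ring
    rw [this, Finset.sum_add_distrib, hsum0, ← Finset.mul_sum, ← hZ]
    ring
  calc ∑ a, π a * Q a = (∑ a, μ a * w a * Q a) / Z := by
        rw [Finset.sum_div]
        exact Finset.sum_congr rfl fun a _ => by rw [hπ a]; ring
    _ = V := by rw [hsumQ, mul_div_assoc, div_self (ne_of_gt hZpos), mul_one]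
end

section
/- Fix a finite action set A, a probability mass function μ with μ(a) > 0 for all a, Q : A → ℝ, and 1/2 < τ₁ ≤ τ₂ < 1. Let π_{τᵢ}(a) ∝ μ(a)·|τᵢ − 𝟙(Q(a) < V_{τᵢ})| be the expectile implicit policies where V_{τᵢ} is the τᵢ-expectile of Q under μ. Then ∑_a π_{τ₂}(a)·Q(a) ≥ ∑_a π_{τ₁}(a)·Q(a). -/
open Filter

private lemma phi_deriv {τ : ℝ} (hτ0 : 0 < τ) (hτ1 : τ < 1) (x : ℝ) :
    HasDerivAt (fun y : ℝ => (if y < 0 then (1 - τ) else τ) * y ^ 2)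
      (2 * (if x < 0 then (1 - τ) else τ) * x) x := by
  rcases lt_trichotomy x 0 with hx | hx | hx
  · have h : HasDerivAt (fun y : ℝ => (1 - τ) * y ^ 2) (2 * (1 - τ) * x) x := by
      have := (hasDerivAt_pow 2 x).const_mul (1 - τ)
      simpa [mul_comm, mul_assoc, mul_left_comm] using this
    rw [if_pos hx]
    refine h.congr_of_eventuallyEq ?_
    filter_upwards [Iio_mem_nhds hx] with y hy
    simp [hy.out]
  · subst hx
    rw [hasDerivAt_iff_tendsto_slope]
    have hb : Tendsto (fun y : ℝ => |y|) (nhdsWithin 0 {(0:ℝ)}ᶜ) (nhds 0) := by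
      have : Tendsto (fun y : ℝ => |y|) (nhds (0:ℝ)) (nhds |0|) :=
        continuous_abs.tendsto 0
      simpa using this.mono_left nhdsWithin_le_nhds
    simp only [mul_zero, if_neg (lt_irrefl (0:ℝ))]
    refine squeeze_zero_norm' ?_ hb
    filter_upwards [self_mem_nhdsWithin] with y hy
    have hy0 : y ≠ 0 := hy
    have : slope (fun y : ℝ => (if y < 0 then (1 - τ) else τ) * y ^ 2) 0 y
        = (if y < 0 then (1 - τ) else τ) * y := by
      simp only [slope_def_field]
      field_simp
      ring
    rw [this]
    rw [Real.norm_eq_abs, abs_mul]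
    have hw : |if y < 0 then (1 - τ) else τ| ≤ 1 := by
      split_ifs <;> rw [abs_of_nonneg (by linarith)] <;> linarith
    calc |if y < 0 then (1 - τ) else τ| * |y| ≤ 1 * |y| :=
          mul_le_mul_of_nonneg_right hw (abs_nonneg _)
      _ = |y| := one_mul _
  · have h : HasDerivAt (fun y : ℝ => τ * y ^ 2) (2 * τ * x) x := by
      have := (hasDerivAt_pow 2 x).const_mul τ
      simpa [mul_comm, mul_assoc, mul_left_comm] using this
    rw [if_neg (by linarith)]
    refine h.congr_of_eventuallyEq ?_
    filter_upwards [Ioi_mem_nhds hx] with y hy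
    simp [not_lt.mpr (le_of_lt hy.out)]

private lemma foc {A : Type*} [Fintype A] (μ Q : A → ℝ) {τ : ℝ}
    (hτ0 : 0 < τ) (hτ1 : τ < 1) (V : ℝ)
    (hV : ∀ W : ℝ,
      ∑ a, μ a * (|τ - if Q a < V then 1 else 0| * (Q a - V) ^ 2) ≤
      ∑ a, μ a * (|τ - if Q a < W then 1 else 0| * (Q a - W) ^ 2)) :
    ∑ a, μ a * ((if Q a < V then (1 - τ) else τ) * (Q a - V)) = 0 := by
  have habs : ∀ (c W : ℝ), |τ - if c < W then 1 else 0| = if c < W then (1 - τ) else τ := by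
    intro c W
    split_ifs
    · rw [abs_of_nonpos (by linarith)]; ring
    · rw [abs_of_nonneg (by linarith)]; ring
  -- the loss as a nice function
  set L : ℝ → ℝ := fun W => ∑ a, μ a * ((if Q a - W < 0 then (1 - τ) else τ) * (Q a - W) ^ 2)
    with hL
  have hLeq : ∀ W, ∑ a, μ a * (|τ - if Q a < W then 1 else 0| * (Q a - W) ^ 2) = L W := by
    intro W
    refine Finset.sum_congr rfl fun a _ => ?_
    rw [habs]
    congr 1
    simp [sub_neg]
  have hmin : IsLocalMin L V := by
    refine Filter.Eventually.of_forall fun W => ?_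
    rw [← hLeq, ← hLeq]; exact hV W
  have hderiv : HasDerivAt L (∑ a, μ a * (2 * (if Q a - V < 0 then (1 - τ) else τ) * (Q a - V) * (-1))) V := by
    rw [hL]
    refine HasDerivAt.fun_sum fun a _ => ?_
    have h1 : HasDerivAt (fun W : ℝ => Q a - W) (-1) V := by
      simpa using (hasDerivAt_id V).const_sub (Q a)
    have h2 := (phi_deriv hτ0 hτ1 (Q a - V)).comp V h1
    simpa [mul_assoc] using h2.const_mul (μ a)
  have h0 := hmin.hasDerivAt_eq_zero hderiv
  have key : ∑ a, μ a * (2 * (if Q a - V < 0 then (1 - τ) else τ) * (Q a - V) * (-1))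
      = (-2) * ∑ a, μ a * ((if Q a - V < 0 then (1 - τ) else τ) * (Q a - V)) := by
    rw [Finset.mul_sum]
    exact Finset.sum_congr rfl fun a _ => by ring
  rw [key] at h0
  have : ∑ a, μ a * ((if Q a - V < 0 then (1 - τ) else τ) * (Q a - V)) = 0 := by linarith
  rw [← this]
  refine Finset.sum_congr rfl fun a _ => ?_
  congr 2
  simp [sub_neg]

private lemma habs' {τ : ℝ} (hτ0 : 0 < τ) (hτ1 : τ < 1) (c W : ℝ) :
    |τ - if c < W then 1 else 0| = if c < W then (1 - τ) else τ := by
  split_ifs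
  · rw [abs_of_nonpos (by linarith)]; ring
  · rw [abs_of_nonneg (by linarith)]; ring

private lemma pol_val {A : Type*} [Fintype A] [Nonempty A] (μ Q : A → ℝ) {τ : ℝ}
    (hμpos : ∀ a, 0 < μ a)
    (hτ0 : 0 < τ) (hτ1 : τ < 1) (V Z : ℝ) (π : A → ℝ)
    (hfoc : ∑ a, μ a * ((if Q a < V then (1 - τ) else τ) * (Q a - V)) = 0)
    (hZ : Z = ∑ a, μ a * |τ - if Q a < V then 1 else 0|)
    (hπ : ∀ a, π a = μ a * |τ - if Q a < V then 1 else 0| / Z) :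
    ∑ a, π a * Q a = V := by
  have hZ' : Z = ∑ a, μ a * (if Q a < V then (1 - τ) else τ) := by
    rw [hZ]; exact Finset.sum_congr rfl fun a _ => by rw [habs' hτ0 hτ1]
  have hZpos : 0 < Z := by
    rw [hZ']
    refine Finset.sum_pos (fun a _ => ?_) Finset.univ_nonempty
    split_ifs <;> exact mul_pos (hμpos a) (by linarith)
  have hsum : ∑ a, μ a * (if Q a < V then (1 - τ) else τ) * Q a = V * Z := by
    have : ∑ a, μ a * (if Q a < V then (1 - τ) else τ) * Q a - V * Z = 0 := by
      rw [hZ', Finset.mul_sum, ← Finset.sum_sub_distrib, ← hfoc]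
      exact Finset.sum_congr rfl fun a _ => by ring
    linarith
  calc ∑ a, π a * Q a = (∑ a, μ a * (if Q a < V then (1 - τ) else τ) * Q a) / Z := by
        rw [Finset.sum_div]
        exact Finset.sum_congr rfl fun a _ => by
          rw [hπ a, habs' hτ0 hτ1]; ring
    _ = V := by rw [hsum]; field_simp

theorem stmt_17 {A : Type*} [Fintype A] [Nonempty A]
    (μ Q : A → ℝ) (hμpos : ∀ a, 0 < μ a) (hμsum : ∑ a, μ a = 1)
    (τ₁ τ₂ : ℝ) (h₁ : 1 / 2 < τ₁) (h₂ : τ₁ ≤ τ₂) (h₃ : τ₂ < 1)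
    (V₁ V₂ : ℝ)
    (hV₁ : ∀ W : ℝ,
      ∑ a, μ a * (|τ₁ - if Q a < V₁ then 1 else 0| * (Q a - V₁) ^ 2) ≤
      ∑ a, μ a * (|τ₁ - if Q a < W then 1 else 0| * (Q a - W) ^ 2))
    (hV₂ : ∀ W : ℝ,
      ∑ a, μ a * (|τ₂ - if Q a < V₂ then 1 else 0| * (Q a - V₂) ^ 2) ≤
      ∑ a, μ a * (|τ₂ - if Q a < W then 1 else 0| * (Q a - W) ^ 2))
    (Z₁ Z₂ : ℝ)
    (hZ₁ : Z₁ = ∑ a, μ a * |τ₁ - if Q a < V₁ then 1 else 0|)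
    (hZ₂ : Z₂ = ∑ a, μ a * |τ₂ - if Q a < V₂ then 1 else 0|)
    (π₁ π₂ : A → ℝ)
    (hπ₁ : ∀ a, π₁ a = μ a * |τ₁ - if Q a < V₁ then 1 else 0| / Z₁)
    (hπ₂ : ∀ a, π₂ a = μ a * |τ₂ - if Q a < V₂ then 1 else 0| / Z₂) :
    ∑ a, π₁ a * Q a ≤ ∑ a, π₂ a * Q a := by
  have hτ₁0 : 0 < τ₁ := by linarith
  have hτ₁1 : τ₁ < 1 := lt_of_le_of_lt h₂ h₃
  have hτ₂0 : 0 < τ₂ := by linarith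
  have foc1 := foc μ Q hτ₁0 hτ₁1 V₁ hV₁
  have foc2 := foc μ Q hτ₂0 h₃ V₂ hV₂
  -- G τ₂ at V₁ is nonnegative
  have hmono : ∑ a, μ a * ((if Q a < V₁ then (1 - τ₁) else τ₁) * (Q a - V₁))
      ≤ ∑ a, μ a * ((if Q a < V₁ then (1 - τ₂) else τ₂) * (Q a - V₁)) := by
    refine Finset.sum_le_sum fun a _ => ?_
    have hμ := (hμpos a).le
    split_ifs with h
    · nlinarith [mul_nonneg (mul_nonneg hμ (sub_nonneg.mpr h₂)) (sub_nonneg.mpr h.le)]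
    · push_neg at h
      nlinarith [mul_nonneg (mul_nonneg hμ (sub_nonneg.mpr h₂)) (sub_nonneg.mpr h)]
  have hGpos : 0 ≤ ∑ a, μ a * ((if Q a < V₁ then (1 - τ₂) else τ₂) * (Q a - V₁)) :=
    foc1 ▸ hmono
  -- V₁ ≤ V₂ by strict antitonicity of G τ₂
  have hVle : V₁ ≤ V₂ := by
    by_contra hlt
    push_neg at hlt
    have hstrict : ∑ a, μ a * ((if Q a < V₁ then (1 - τ₂) else τ₂) * (Q a - V₁))
        < ∑ a, μ a * ((if Q a < V₂ then (1 - τ₂) else τ₂) * (Q a - V₂)) := by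
      refine Finset.sum_lt_sum_of_nonempty Finset.univ_nonempty fun a _ => ?_
      refine mul_lt_mul_of_pos_left ?_ (hμpos a)
      rcases lt_or_ge (Q a) V₂ with hc2 | hc2
      · rw [if_pos hc2, if_pos (hc2.trans hlt)]
        nlinarith
      · rw [if_neg (not_lt.mpr hc2)]
        rcases lt_or_ge (Q a) V₁ with hc1 | hc1
        · rw [if_pos hc1]; nlinarith
        · rw [if_neg (not_lt.mpr hc1)]; nlinarith
    rw [foc2] at hstrict
    linarith
  have e1 := pol_val μ Q hμpos hτ₁0 hτ₁1 V₁ Z₁ π₁ foc1 hZ₁ hπ₁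
  have e2 := pol_val μ Q hμpos hτ₂0 h₃ V₂ Z₂ π₂ foc2 hZ₂ hπ₂
  rw [e1, e2]; exact hVle
end
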